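/- Let f : X → X be a homeomorphism of a topological space X such that the induced ℤ-action n·x = fⁿ(x) is cocompactly expansive. Then for every integer n ≠ 0, the ℤ-action generated by fⁿ (i.e. m·x = f^{nm}(x)) is cocompactly expansive. -/

import Mathlib

/-- Cocompact expansiveness. -/
def CocompactlyExpansive {G X : Type*} [TopologicalSpace X] (φ : G → X → X) : Prop :=
  ∃ (𝒰 : Finset (Set X)) (K : Set X),
    (∀ U ∈ 𝒰, IsOpen U) ∧ (∀ x : X, ∃ U ∈ 𝒰, x ∈ U) ∧
    IsCompact K ∧ (∀ x : X, ∃ g : G, ∃ k ∈ K, x = φ g k) ∧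
    (∀ x y : X, (∀ g : G, (∃ U ∈ 𝒰, φ g x ∈ U ∧ φ g y ∈ U) ∨ (φ g x ∉ K ∧ φ g y ∉ K)) →
      x = y)

private lemma cont_zpow {X : Type*} [TopologicalSpace X] (f : X ≃ₜ X) (j : ℤ) :
    Continuous ⇑(f.toEquiv ^ j) := by
  cases j with
  | ofNat m =>
    rw [Int.ofNat_eq_coe, zpow_natCast, Equiv.Perm.coe_pow]
    exact f.continuous.iterate m
  | negSucc m =>
    rw [zpow_negSucc, ← inv_pow, Equiv.Perm.coe_pow]
    exact f.symm.continuous.iterate (m + 1)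

private lemma zpow_apply_add {X : Type*} [TopologicalSpace X] (f : X ≃ₜ X) (a b : ℤ) (x : X) :
    (f.toEquiv ^ (a + b)) x = (f.toEquiv ^ a) ((f.toEquiv ^ b) x) := by
  rw [zpow_add]; rfl

/-- If `f : X → X` is a homeomorphism whose induced `ℤ`-action `k ⬝ x = f^k x` is
cocompactly expansive, then for every `n ≠ 0` the `ℤ`-action generated by `f^n`
(i.e. `m ⬝ x = f^(n*m) x`) is cocompactly expansive. -/
theorem cocompactlyExpansive_power {X : Type*} [TopologicalSpace X] (f : X ≃ₜ X)
    (hce : CocompactlyExpansive (fun (k : ℤ) (x : X) => (f.toEquiv ^ k) x))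
    (n : ℤ) (hn : n ≠ 0) :
    CocompactlyExpansive (fun (m : ℤ) (x : X) => (f.toEquiv ^ (n * m)) x) := by
  classical
  obtain ⟨𝒰, K, hUo, hUc, hKc, hKcov, hexp⟩ := hce
  set N := n.natAbs with hNdef
  have hN : 0 < N := Int.natAbs_pos.mpr hn
  -- division facts
  have hdiv : ∀ k : ℤ, 0 ≤ k % n ∧ k % n < (N : ℤ) ∧ k = n * (k / n) + k % n := by
    intro k
    have h1 := Int.emod_nonneg k hn
    have h2 := Int.emod_lt k hn
    have h3 := Int.mul_ediv_add_emod k n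
    omega
  refine ⟨(Fintype.piFinset fun _ : Fin N => 𝒰).image
      (fun w => ⋂ r : Fin N, (⇑(f.toEquiv ^ ((r : ℕ) : ℤ))) ⁻¹' (w r)),
    ⋃ r : Fin N, ((⇑(f.toEquiv ^ ((r : ℕ) : ℤ))) '' K ∪
      (⇑(f.toEquiv ^ (-((r : ℕ) : ℤ)))) '' K), ?_, ?_, ?_, ?_, ?_⟩
  · -- open
    intro V hV
    obtain ⟨w, hw, rfl⟩ := Finset.mem_image.mp hV
    exact isOpen_iInter_of_finite fun r =>
      (hUo _ (Fintype.mem_piFinset.mp hw r)).preimage (cont_zpow f _)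
  · -- cover
    intro x
    have hch : ∀ r : Fin N, ∃ U ∈ 𝒰, (f.toEquiv ^ ((r : ℕ) : ℤ)) x ∈ U := fun r =>
      hUc ((f.toEquiv ^ ((r : ℕ) : ℤ)) x)
    choose w hw1 hw2 using hch
    refine ⟨_, Finset.mem_image.mpr ⟨w, Fintype.mem_piFinset.mpr hw1, rfl⟩, ?_⟩
    exact Set.mem_iInter.mpr fun r => hw2 r
  · -- compact
    exact isCompact_iUnion fun r =>
      (hKc.image (cont_zpow f _)).union (hKc.image (cont_zpow f _))
  · -- cocompact
    intro x
    obtain ⟨k, k₀, hk₀, hx⟩ := hKcov x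
    obtain ⟨h1, h2, h3⟩ := hdiv k
    refine ⟨k / n, (f.toEquiv ^ (k % n)) k₀, ?_, ?_⟩
    · refine Set.mem_iUnion.mpr ⟨⟨(k % n).toNat, by omega⟩, Or.inl ⟨k₀, hk₀, ?_⟩⟩
      simp only [Int.toNat_of_nonneg h1]
    · rw [hx]
      show (f.toEquiv ^ k) k₀ = (f.toEquiv ^ (n * (k / n))) ((f.toEquiv ^ (k % n)) k₀)
      rw [← zpow_apply_add, ← h3]
  · -- expansiveness
    intro x y h
    refine hexp x y fun k => ?_
    obtain ⟨h1, h2, h3⟩ := hdiv k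
    have h3' : k = k % n + n * (k / n) := by omega
    have hk : (f.toEquiv ^ k) x = (f.toEquiv ^ (k % n)) ((f.toEquiv ^ (n * (k / n))) x) := by
      rw [← zpow_apply_add, ← h3']
    have hky : (f.toEquiv ^ k) y = (f.toEquiv ^ (k % n)) ((f.toEquiv ^ (n * (k / n))) y) := by
      rw [← zpow_apply_add, ← h3']
    rcases h (k / n) with ⟨V, hV, hxV, hyV⟩ | ⟨hxK, hyK⟩
    · left
      obtain ⟨w, hw, rfl⟩ := Finset.mem_image.mp hV
      set r : Fin N := ⟨(k % n).toNat, by omega⟩ with hrdef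
      have hrc : (((r : ℕ) : ℤ)) = k % n := Int.toNat_of_nonneg h1
      refine ⟨w r, Fintype.mem_piFinset.mp hw r, ?_, ?_⟩
      · have hm := Set.mem_iInter.mp hxV r
        show (f.toEquiv ^ k) x ∈ w r
        rw [hk, ← hrc]
        exact hm
      · have hm := Set.mem_iInter.mp hyV r
        show (f.toEquiv ^ k) y ∈ w r
        rw [hky, ← hrc]
        exact hm
    · right
      set r : Fin N := ⟨(k % n).toNat, by omega⟩ with hrdef
      have hrc : (((r : ℕ) : ℤ)) = k % n := Int.toNat_of_nonneg h1
      constructor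
      · intro hc
        refine hxK (Set.mem_iUnion.mpr ⟨r, Or.inr ⟨(f.toEquiv ^ k) x, hc, ?_⟩⟩)
        show (f.toEquiv ^ (-((r : ℕ) : ℤ))) ((f.toEquiv ^ k) x)
          = (f.toEquiv ^ (n * (k / n))) x
        rw [hk, ← hrc, ← zpow_apply_add, neg_add_cancel, zpow_zero]
        rfl
      · intro hc
        refine hyK (Set.mem_iUnion.mpr ⟨r, Or.inr ⟨(f.toEquiv ^ k) y, hc, ?_⟩⟩)
        show (f.toEquiv ^ (-((r : ℕ) : ℤ))) ((f.toEquiv ^ k) y)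
          = (f.toEquiv ^ (n * (k / n))) y
        rw [hky, ← hrc, ← zpow_apply_add, neg_add_cancel, zpow_zero]
        rfl
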